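/- The interquartile range does not preserve the ∧-discrete dispersive order: let F be the distribution with P(X=1)=P(X=4)=3/10 and P(X=2)=P(X=3)=1/5, and G the uniform distribution on {1,2,3,4,5}. Then F ≼_∧ G, but F⁻¹(3/4) - F⁻¹(1/4) > G⁻¹(3/4) - G⁻¹(1/4), where F⁻¹(p) = inf{t : F(t) ≥ p}. -/

import Mathlib

/-- A purposive discrete distribution: support indexed by an interval of `ℤ`
with at least two elements, strictly increasing support points `x` and
positive probabilities `p` summing to one. -/
structure DiscDist where
  A : Set ℤ
  x : ℤ → ℝ
  p : ℤ → ℝ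
  hA2 : ∃ a b, a ∈ A ∧ b ∈ A ∧ a ≠ b
  hAconn : ∀ a b c : ℤ, a ∈ A → c ∈ A → a ≤ b → b ≤ c → b ∈ A
  hmono : ∀ a b : ℤ, a ∈ A → b ∈ A → a < b → x a < x b
  hpos : ∀ a ∈ A, 0 < p a
  hzero : ∀ a ∉ A, p a = 0
  hsummable : Summable p
  hsum : ∑' a, p a = 1

/-- Cumulative probability strictly below index `a`, i.e. `F(x_{a-1})`. -/
noncomputable def DiscDist.L (D : DiscDist) (a : ℤ) : ℝ :=
  ∑' i : ℤ, if i < a then D.p i else 0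

/-- The relation `a ▷◁ b`: the jump intervals `(F(x_{a-1}), F(x_a))` and
`(G(y_{b-1}), G(y_b))` intersect. -/
def DRel (F G : DiscDist) (a b : ℤ) : Prop :=
  a ∈ F.A ∧ b ∈ G.A ∧
    max (F.L a) (G.L b) < min (F.L (a + 1)) (G.L (b + 1))

/-- The ∧-discrete dispersive order `F ≼_∧ G`. -/
def discoA (F G : DiscDist) : Prop :=
  (∀ a b, DRel F G a b → G.p b ≤ F.p a) ∧
  (∀ a b, DRel F G a b → DRel F G (a - 1) (b - 1) →
    F.x a - F.x (a - 1) ≤ G.x b - G.x (b - 1))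

/-- The ∨-discrete dispersive order `F ≼_∨ G`. -/
def discoO (F G : DiscDist) : Prop :=
  (∀ a b, DRel F G a b → G.p b ≤ F.p a) ∧
  (∀ a b, a ∈ F.A → a - 1 ∈ F.A → b ∈ G.A → b - 1 ∈ G.A →
    (DRel F G a b ∨ DRel F G (a - 1) (b - 1)) →
    F.x a - F.x (a - 1) ≤ G.x b - G.x (b - 1))

/-- Cumulative distribution function of a discrete distribution. -/
noncomputable def DiscDist.cdf (D : DiscDist) (t : ℝ) : ℝ :=
  ∑' a : ℤ, if D.x a ≤ t then D.p a else 0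

/-- The discrete uniform distribution on `{1, ..., n}`. -/
noncomputable def unifDist (n : ℤ) (hn : 2 ≤ n) : DiscDist where
  A := Set.Icc 1 n
  x := fun a => (a : ℝ)
  p := fun a => if 1 ≤ a ∧ a ≤ n then ((n : ℝ))⁻¹ else 0
  hA2 := ⟨1, 2, by simp [Set.mem_Icc]; omega, by simp [Set.mem_Icc]; omega, by omega⟩
  hAconn := by intro a b c ha hc hab hbc; simp only [Set.mem_Icc] at *; omega
  hmono := by intro a b _ _ hab; beta_reduce; exact_mod_cast hab
  hpos := by
    intro a ha
    simp only [Set.mem_Icc] at ha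
    beta_reduce
    rw [if_pos ha]
    have : (0 : ℝ) < (n : ℝ) := by exact_mod_cast (by omega : (0 : ℤ) < n)
    positivity
  hzero := by
    intro a ha
    simp only [Set.mem_Icc] at ha
    beta_reduce
    rw [if_neg]; omega
  hsummable := by
    apply summable_of_ne_finset_zero (s := Finset.Icc 1 n)
    intro a ha
    simp only [Finset.mem_Icc] at ha
    rw [if_neg]; omega
  hsum := by
    rw [tsum_eq_sum (s := Finset.Icc 1 n)
      (by intro a ha; simp only [Finset.mem_Icc] at ha; rw [if_neg]; omega)]
    have hcard : (Finset.Icc (1 : ℤ) n).card = (n : ℤ).toNat := by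
      rw [Int.card_Icc]; omega
    rw [Finset.sum_congr rfl (fun a ha => by
      simp only [Finset.mem_Icc] at ha; rw [if_pos ha])]
    rw [Finset.sum_const, hcard, nsmul_eq_mul]
    have hn0 : (n : ℝ) ≠ 0 := by exact_mod_cast (by omega : n ≠ 0)
    have : ((n.toNat : ℝ)) = (n : ℝ) := by exact_mod_cast (by omega : (n.toNat : ℤ) = n)
    rw [this, mul_inv_cancel₀ hn0]


/-- Left-continuous quantile function of a cdf. -/
noncomputable def quantile (F : ℝ → ℝ) (p : ℝ) : ℝ := sInf {t : ℝ | p ≤ F t}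

/-- The distribution with `P(X=1)=P(X=4)=3/10`, `P(X=2)=P(X=3)=1/5`. -/
noncomputable def F17 : DiscDist where
  A := Set.Icc 1 4
  x := fun a => (a : ℝ)
  p := fun a => if a = 1 ∨ a = 4 then 3 / 10 else if a = 2 ∨ a = 3 then 1 / 5 else 0
  hA2 := ⟨1, 2, by norm_num [Set.mem_Icc], by norm_num [Set.mem_Icc], by omega⟩
  hAconn := by intro a b c ha hc hab hbc; simp only [Set.mem_Icc] at *; omega
  hmono := by intro a b _ _ hab; beta_reduce; exact_mod_cast hab
  hpos := by
    intro a ha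
    simp only [Set.mem_Icc] at ha
    beta_reduce
    split_ifs with h1 h2 <;> [norm_num; norm_num; omega]
  hzero := by
    intro a ha
    simp only [Set.mem_Icc] at ha
    by_cases h1 : a = 1 ∨ a = 4
    · omega
    · by_cases h2 : a = 2 ∨ a = 3
      · omega
      · simp [h1, h2]
  hsummable := by
    apply summable_of_ne_finset_zero (s := Finset.Icc 1 4)
    intro a ha
    simp only [Finset.mem_Icc] at ha
    by_cases h1 : a = 1 ∨ a = 4
    · omega
    · by_cases h2 : a = 2 ∨ a = 3
      · omega
      · simp [h1, h2]
  hsum := by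
    rw [tsum_eq_sum (s := Finset.Icc 1 4) (by
      intro a ha
      simp only [Finset.mem_Icc] at ha
      by_cases h1 : a = 1 ∨ a = 4
      · omega
      · by_cases h2 : a = 2 ∨ a = 3
        · omega
        · simp [h1, h2])]
    show (Finset.Icc (1 : ℤ) 4).sum _ = 1
    rw [show Finset.Icc (1 : ℤ) 4 = {1, 2, 3, 4} by decide]
    norm_num


lemma cdfU5 (t : ℝ) : (unifDist 5 (by norm_num)).cdf t =
    (if (1:ℝ) ≤ t then (5:ℝ)⁻¹ else 0) + ((if (2:ℝ) ≤ t then (5:ℝ)⁻¹ else 0) +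
    ((if (3:ℝ) ≤ t then (5:ℝ)⁻¹ else 0) + ((if (4:ℝ) ≤ t then (5:ℝ)⁻¹ else 0) +
    (if (5:ℝ) ≤ t then (5:ℝ)⁻¹ else 0)))) := by
  unfold DiscDist.cdf
  rw [tsum_eq_sum (s := Finset.Icc (1:ℤ) 5) (by
    intro a ha
    simp only [Finset.mem_Icc] at ha
    have : (unifDist 5 (by norm_num)).p a = 0 := by
      show (if 1 ≤ a ∧ a ≤ 5 then ((5:ℤ):ℝ)⁻¹ else 0) = 0
      rw [if_neg]; omega
    simp [this])]
  rw [show Finset.Icc (1:ℤ) 5 = {1,2,3,4,5} by decide]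
  show ∑ a ∈ ({1,2,3,4,5} : Finset ℤ), (if ((a:ℝ)) ≤ t then (if 1 ≤ a ∧ a ≤ 5 then ((5:ℤ):ℝ)⁻¹ else 0) else 0) = _
  norm_num

lemma cdfF17 (t : ℝ) : F17.cdf t =
    (if (1:ℝ) ≤ t then (3/10:ℝ) else 0) + ((if (2:ℝ) ≤ t then (1/5:ℝ) else 0) +
    ((if (3:ℝ) ≤ t then (1/5:ℝ) else 0) + (if (4:ℝ) ≤ t then (3/10:ℝ) else 0))) := by
  unfold DiscDist.cdf
  rw [tsum_eq_sum (s := Finset.Icc (1:ℤ) 4) (by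
    intro a ha
    simp only [Finset.mem_Icc] at ha
    have : F17.p a = 0 := by
      show (if a = 1 ∨ a = 4 then (3/10:ℝ) else if a = 2 ∨ a = 3 then 1/5 else 0) = 0
      rw [if_neg (by omega), if_neg (by omega)]
    simp [this])]
  rw [show Finset.Icc (1:ℤ) 4 = {1,2,3,4} by decide]
  show ∑ a ∈ ({1,2,3,4} : Finset ℤ), (if ((a:ℝ)) ≤ t then
    (if a = 1 ∨ a = 4 then (3/10:ℝ) else if a = 2 ∨ a = 3 then 1/5 else 0) else 0) = _
  norm_num

lemma qset (c : ℝ) {D : DiscDist} {p : ℝ}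
    (h : {t : ℝ | p ≤ D.cdf t} = Set.Ici c) : quantile D.cdf p = c := by
  unfold quantile; rw [h, csInf_Ici]

lemma qU14 : quantile (unifDist 5 (by norm_num)).cdf (1/4) = 2 := by
  apply qset
  ext t
  simp only [Set.mem_setOf_eq, Set.mem_Ici, cdfU5]
  constructor
  · intro h; by_contra hlt; push_neg at hlt
    split_ifs at h <;> linarith
  · intro h
    rw [if_pos (by linarith), if_pos h]
    split_ifs <;> norm_num

lemma qU34 : quantile (unifDist 5 (by norm_num)).cdf (3/4) = 4 := by
  apply qset
  ext t
  simp only [Set.mem_setOf_eq, Set.mem_Ici, cdfU5]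
  constructor
  · intro h; by_contra hlt; push_neg at hlt
    split_ifs at h <;> linarith
  · intro h
    rw [if_pos (by linarith), if_pos (by linarith), if_pos (by linarith), if_pos h]
    split_ifs <;> norm_num

lemma qF14 : quantile F17.cdf (1/4) = 1 := by
  apply qset
  ext t
  simp only [Set.mem_setOf_eq, Set.mem_Ici, cdfF17]
  constructor
  · intro h; by_contra hlt; push_neg at hlt
    split_ifs at h <;> linarith
  · intro h
    rw [if_pos h]
    split_ifs <;> norm_num

lemma qF34 : quantile F17.cdf (3/4) = 4 := by
  apply qset
  ext t
  simp only [Set.mem_setOf_eq, Set.mem_Ici, cdfF17]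
  constructor
  · intro h; by_contra hlt; push_neg at hlt
    split_ifs at h <;> linarith
  · intro h
    rw [if_pos (by linarith), if_pos (by linarith), if_pos (by linarith), if_pos h]
    norm_num

/-- The interquartile range does not preserve `≼_∧`: with `F = F17` and
`G = U{1,...,5}`, we have `F ≼_∧ G` but `IQR(F) > IQR(G)`. -/
theorem stmt_17 :
    discoA F17 (unifDist 5 (by norm_num)) ∧
    quantile (unifDist 5 (by norm_num)).cdf (3 / 4) -
        quantile (unifDist 5 (by norm_num)).cdf (1 / 4) <
      quantile F17.cdf (3 / 4) - quantile F17.cdf (1 / 4) := by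
  constructor
  · constructor
    · rintro a b ⟨ha, hb, -⟩
      simp only [F17, unifDist, Set.mem_Icc] at ha hb ⊢
      rw [if_pos hb]
      split_ifs with h1 h2 <;> norm_num <;> omega
    · rintro a b ⟨ha, hb, -⟩ ⟨ha', hb', -⟩
      show (a:ℝ) - ((a-1:ℤ):ℝ) ≤ (b:ℝ) - ((b-1:ℤ):ℝ)
      push_cast; norm_num
  · rw [qU14, qU34, qF14, qF34]; norm_num
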